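/- Let F be a field, k ≥ 2, and let P(λ) = Σ_{i=0}^{k} P_i φ_i(λ) with P_i ∈ F^{m×m} and P_k ≠ 0 (a polynomial matrix of degree k). Then for each v ∈ F^k there is exactly one pencil L(λ) = λX + Y ∈ F[λ]^{km×km} that is block-symmetric and satisfies L(λ)·(Φ_k(λ)⊗I_m) = v ⊗ P(λ); that is, for each v ∈ F^k there is a unique pencil in DM(P) with ansatz vector v. -/
import Mathlib


open Matrix

/-- The column vector `Φ_k(λ) ⊗ I_m` as a `km × m` polynomial matrix. -/
noncomputable def phiKron {F : Type*} [Field F] (φ : ℕ → Polynomial F) (k m : ℕ) :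
    Matrix (Fin k × Fin m) (Fin m) (Polynomial F) :=
  Matrix.of fun p j => if p.2 = j then φ (k - 1 - (p.1 : ℕ)) else 0

/-- The matrix `v ⊗ I_m ∈ R^{km×m}` built from a vector `v ∈ R^k`. -/
def vKron {R : Type*} [Semiring R] (k m : ℕ) (v : Fin k → R) :
    Matrix (Fin k × Fin m) (Fin m) R :=
  Matrix.of fun p j => if p.2 = j then v p.1 else 0

open Polynomial

section
variable {F : Type*} [Field F]

def DM_clamp (k : ℕ) (x : Matrix (Fin k) (Fin k) F) : ℕ → ℕ → F :=
  fun p u => if h : p < k ∧ u < k then x ⟨p, h.1⟩ ⟨u, h.2⟩ else 0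

lemma DM_clamp_add (k : ℕ) (x x' : Matrix (Fin k) (Fin k) F) (p u : ℕ) :
    DM_clamp k (x + x') p u = DM_clamp k x p u + DM_clamp k x' p u := by
  unfold DM_clamp; split <;> simp [Matrix.add_apply]

lemma DM_clamp_smul (k : ℕ) (c : F) (x : Matrix (Fin k) (Fin k) F) (p u : ℕ) :
    DM_clamp k (c • x) p u = c * DM_clamp k x p u := by
  unfold DM_clamp; split <;> simp [Matrix.smul_apply]

lemma DM_clamp_zero_left (k : ℕ) (x : Matrix (Fin k) (Fin k) F) (p u : ℕ) (h : k ≤ p) :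
    DM_clamp k x p u = 0 := by
  unfold DM_clamp; rw [dif_neg (by omega)]

lemma DM_clamp_zero_right (k : ℕ) (x : Matrix (Fin k) (Fin k) F) (p u : ℕ) (h : k ≤ u) :
    DM_clamp k x p u = 0 := by
  unfold DM_clamp; rw [dif_neg (by omega)]

lemma DM_clamp_symm (k : ℕ) (x : Matrix (Fin k) (Fin k) F) (hx : ∀ i j, x i j = x j i)
    (p u : ℕ) : DM_clamp k x p u = DM_clamp k x u p := by
  unfold DM_clamp
  rcases lt_or_ge p k with hp | hp
  · rcases lt_or_ge u k with hu | hu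
    · rw [dif_pos ⟨hp, hu⟩, dif_pos ⟨hu, hp⟩]; exact hx _ _
    · rw [dif_neg (by omega), dif_neg (by omega)]
  · rw [dif_neg (by omega), dif_neg (by omega)]

lemma DM_clamp_eq (k : ℕ) (x : Matrix (Fin k) (Fin k) F) (i j : Fin k) :
    DM_clamp k x i j = x i j := by
  unfold DM_clamp; rw [dif_pos ⟨i.isLt, j.isLt⟩]

def DM_E (k : ℕ) (α β γ : ℕ → F) (x y : Matrix (Fin k) (Fin k) F) (p u : ℕ) : F :=
  (if u = 0 then 0 else α (u-1) * DM_clamp k x p (u-1)) + β u * DM_clamp k x p u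
    + γ (u+1) * DM_clamp k x p (u+1) + DM_clamp k y p u

def DM_sym (k : ℕ) (f : Sym2 (Fin k) → F) : Matrix (Fin k) (Fin k) F := fun i j => f s(i, j)

lemma DM_sym_symm (k : ℕ) (f : Sym2 (Fin k) → F) (i j : Fin k) :
    DM_sym k f i j = DM_sym k f j i := by
  unfold DM_sym; rw [Sym2.eq_swap]

noncomputable def DM_T (k : ℕ) (α β γ : ℕ → F) :
    ((Sym2 (Fin k) → F) × (Sym2 (Fin k) → F)) →ₗ[F] (Fin k × Fin (k+1) → F) where
  toFun fg := fun pu => DM_E k α β γ (DM_sym k fg.1) (DM_sym k fg.2) pu.1 pu.2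
  map_add' fg fg' := by
    funext pu
    have h1 : DM_sym k (fg + fg').1 = DM_sym k fg.1 + DM_sym k fg'.1 := rfl
    have h2 : DM_sym k (fg + fg').2 = DM_sym k fg.2 + DM_sym k fg'.2 := rfl
    simp only [DM_E, h1, h2, DM_clamp_add, Pi.add_apply]
    split <;> ring
  map_smul' c fg := by
    funext pu
    have h1 : DM_sym k (c • fg).1 = c • DM_sym k fg.1 := rfl
    have h2 : DM_sym k (c • fg).2 = c • DM_sym k fg.2 := rfl
    simp only [DM_E, h1, h2, DM_clamp_smul, RingHom.id_apply, Pi.smul_apply, smul_eq_mul]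
    split <;> ring

variable (α β γ : ℕ → F) (φ : ℕ → Polynomial F)

lemma DM_phi_coeff (hα : ∀ j, α j ≠ 0) (hφ0 : φ 0 = 1)
    (hrec : ∀ j : ℕ, C (α j) * φ (j + 1)
      = (X - C (β j)) * φ j - C (γ j) * (if j = 0 then 0 else φ (j - 1))) :
    ∀ j : ℕ, ((φ j).coeff j ≠ 0) ∧ ∀ u, j < u → (φ j).coeff u = 0 := by
  intro j
  induction j using Nat.strong_induction_on with
  | _ j ih =>
    match j with
    | 0 =>
      constructor
      · simp [hφ0]
      · intro u hu; rw [hφ0, coeff_one, if_neg (by omega)]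
    | (j+1) =>
      have h := hrec j
      have hcoeff : ∀ u : ℕ, α j * (φ (j+1)).coeff u
          = ((X - C (β j)) * φ j).coeff u
            - γ j * ((if j = 0 then 0 else φ (j - 1)) : Polynomial F).coeff u := by
        intro u
        have := congrArg (fun p => Polynomial.coeff p u) h
        simp only [coeff_C_mul, coeff_sub] at this
        exact this
      have hγ0 : ∀ u, j < u → ((if j = 0 then 0 else φ (j - 1)) : Polynomial F).coeff u = 0 := by
        intro u hu
        split
        · simp
        · next hj =>
          exact (ih (j-1) (by omega)).2 u (by omega)
      have hXm : ∀ u, ((X - C (β j)) * φ j).coeff (u+1)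
          = (φ j).coeff u - β j * (φ j).coeff (u+1) := by
        intro u
        rw [sub_mul, coeff_sub, coeff_X_mul, coeff_C_mul]
      constructor
      · have h1 : α j * (φ (j+1)).coeff (j+1) = (φ j).coeff j := by
          rw [hcoeff, hXm, (ih j (by omega)).2 (j+1) (by omega), hγ0 (j+1) (by omega)]
          ring
        have := (ih j (by omega)).1
        intro hc
        rw [hc, mul_zero] at h1
        exact this h1.symm
      · intro u hu
        obtain ⟨w, rfl⟩ : ∃ w, u = w + 1 := ⟨u - 1, by omega⟩
        have h1 : α j * (φ (j+1)).coeff (w+1) = 0 := by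
          rw [hcoeff, hXm, (ih j (by omega)).2 w (by omega),
            (ih j (by omega)).2 (w+1) (by omega), hγ0 (w+1) (by omega)]
          ring
        exact (mul_eq_zero.mp h1).resolve_left (hα j)

lemma DM_phi_indep (hα : ∀ j, α j ≠ 0) (hφ0 : φ 0 = 1)
    (hrec : ∀ j : ℕ, C (α j) * φ (j + 1)
      = (X - C (β j)) * φ j - C (γ j) * (if j = 0 then 0 else φ (j - 1))) :
    ∀ (n : ℕ) (w : ℕ → F), (∑ u ∈ Finset.range n, C (w u) * φ u) = 0 → ∀ u < n, w u = 0 := by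
  intro n
  induction n with
  | zero => intro w _ u hu; omega
  | succ n ihn =>
    intro w hsum
    have hwn : w n = 0 := by
      have := congrArg (fun p => Polynomial.coeff p n) hsum
      simp only [Finset.sum_range_succ, coeff_add, coeff_zero] at this
      rw [Polynomial.finset_sum_coeff] at this
      have hz : ∀ u ∈ Finset.range n, (C (w u) * φ u).coeff n = 0 := by
        intro u hu
        rw [coeff_C_mul, (DM_phi_coeff α β γ φ hα hφ0 hrec u).2 n (Finset.mem_range.mp hu),
          mul_zero]
      rw [Finset.sum_eq_zero hz, coeff_C_mul, zero_add] at this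
      exact (mul_eq_zero.mp this).resolve_right (DM_phi_coeff α β γ φ hα hφ0 hrec n).1
    have hrest : (∑ u ∈ Finset.range n, C (w u) * φ u) = 0 := by
      rw [Finset.sum_range_succ, hwn] at hsum
      simpa using hsum
    intro u hu
    rcases Nat.lt_succ_iff_lt_or_eq.mp hu with h | rfl
    · exact ihn w hrest u h
    · exact hwn

lemma DM_identity (k : ℕ) (hk : 1 ≤ k)
    (hrec : ∀ j : ℕ, C (α j) * φ (j + 1)
      = (X - C (β j)) * φ j - C (γ j) * (if j = 0 then 0 else φ (j - 1)))
    (x y : Matrix (Fin k) (Fin k) F) (p : Fin k) :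
    ∑ d : Fin k, (X * C (x p d) + C (y p d)) * φ (d : ℕ)
      = ∑ u ∈ Finset.range (k+1), C (DM_E k α β γ x y p u) * φ u := by
  set A := DM_clamp k x with hA
  set B := DM_clamp k y with hB
  set ψ : ℕ → Polynomial F := fun j => if j = 0 then 0 else φ (j - 1) with hψ
  have hXφ : ∀ j : ℕ, X * φ j = C (α j) * φ (j+1) + C (β j) * φ j + C (γ j) * ψ j := by
    intro j
    simp only [hψ]
    linear_combination -(hrec j)
  have step1 : ∑ d : Fin k, (X * C (x p d) + C (y p d)) * φ (d : ℕ)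
      = ∑ j ∈ Finset.range k, (X * C (A p j) + C (B p j)) * φ j := by
    rw [← Fin.sum_univ_eq_sum_range (fun j => (X * C (A (p : ℕ) j) + C (B (p : ℕ) j)) * φ j) k]
    refine Finset.sum_congr rfl fun d _ => ?_
    rw [hA, hB, DM_clamp_eq, DM_clamp_eq]
  rw [step1]
  have step2 : ∀ j ∈ Finset.range k, (X * C (A p j) + C (B p j)) * φ j
      = C (α j * A p j) * φ (j+1)
        + (C (β j * A p j + B p j) * φ j + C (γ j * A p j) * ψ j) := by
    intro j _
    have := hXφ j
    rw [C_add, C_mul, C_mul, C_mul]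
    linear_combination (C (A (p:ℕ) j)) * this
  rw [Finset.sum_congr rfl step2, Finset.sum_add_distrib, Finset.sum_add_distrib]
  have S1 : ∑ j ∈ Finset.range k, C (α j * A p j) * φ (j+1)
      = ∑ u ∈ Finset.range (k+1),
          C (if u = 0 then 0 else α (u-1) * A p (u-1)) * φ u := by
    rw [Finset.sum_range_succ']
    simp
  have S2 : ∑ j ∈ Finset.range k, C (β j * A p j + B p j) * φ j
      = ∑ u ∈ Finset.range (k+1), C (β u * A p u + B p u) * φ u := by
    refine Finset.sum_subset (Finset.range_subset_range.mpr (by omega)) fun u _ hu => ?_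
    have hku : k ≤ u := by simpa using hu
    rw [hA, hB, DM_clamp_zero_right k x _ _ hku, DM_clamp_zero_right k y _ _ hku]
    simp
  have S3 : ∑ j ∈ Finset.range k, C (γ j * A p j) * ψ j
      = ∑ u ∈ Finset.range (k+1), C (γ (u+1) * A p (u+1)) * φ u := by
    obtain ⟨k', rfl⟩ : ∃ k', k = k' + 1 := ⟨k - 1, by omega⟩
    rw [Finset.sum_range_succ']
    have hψ0 : ψ 0 = 0 := by rw [hψ]; simp
    rw [hψ0, mul_zero, add_zero]
    have : ∀ j ∈ Finset.range k', C (γ (j+1) * A p (j+1)) * ψ (j+1)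
        = C (γ (j+1) * A p (j+1)) * φ j := by
      intro j _
      rw [hψ]; simp
    rw [Finset.sum_congr rfl this]
    refine Finset.sum_subset (Finset.range_subset_range.mpr (by omega)) fun u _ hu => ?_
    have hku : k' ≤ u := by simpa using hu
    rw [hA, DM_clamp_zero_right (k'+1) x _ _ (by omega)]
    simp
  rw [S1, S2, S3, ← Finset.sum_add_distrib, ← Finset.sum_add_distrib]
  refine Finset.sum_congr rfl fun u _ => ?_
  rw [DM_E, ← hA, ← hB]
  rw [← add_mul, ← add_mul, ← C_add, ← C_add]
  ring_nf

lemma DM_xy_zero (k : ℕ) (hk : 1 ≤ k) (α β γ : ℕ → F) (hα : ∀ j, α j ≠ 0)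
    (x y : Matrix (Fin k) (Fin k) F)
    (hx : ∀ i j, x i j = x j i) (hy : ∀ i j, y i j = y j i)
    (hE : ∀ (p : Fin k) (u : ℕ), u < k + 1 → DM_E k α β γ x y (p : ℕ) u = 0) :
    x = 0 ∧ y = 0 := by
  set A := DM_clamp k x with hA
  set B := DM_clamp k y with hB
  have hE' : ∀ p u : ℕ, p < k → u < k + 1 → DM_E k α β γ x y p u = 0 :=
    fun p u hp hu => hE ⟨p, hp⟩ u hu
  have hAsym : ∀ p u, A p u = A u p := fun p u => DM_clamp_symm k x hx p u
  have hBsym : ∀ p u, B p u = B u p := fun p u => DM_clamp_symm k y hy p u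
  have hAr : ∀ p u, k ≤ u → A p u = 0 := fun p u h => DM_clamp_zero_right k x p u h
  have hAl : ∀ p u, k ≤ p → A p u = 0 := fun p u h => DM_clamp_zero_left k x p u h
  have hBr : ∀ p u, k ≤ u → B p u = 0 := fun p u h => DM_clamp_zero_right k y p u h
  have hAk1 : ∀ p : ℕ, A p (k-1) = 0 := by
    intro p
    rcases lt_or_ge p k with hp | hp
    · have e := hE' p k hp (by omega)
      rw [DM_E, ← hA, ← hB] at e
      rw [if_neg (by omega), hAr p k le_rfl, hAr p (k+1) (by omega), hBr p k le_rfl] at e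
      simp only [mul_zero, add_zero] at e
      exact (mul_eq_zero.mp e).resolve_left (hα (k-1))
    · exact hAl p (k-1) hp
  have Rel : ∀ p u : ℕ, p < k → u < k →
      (if u = 0 then 0 else α (u-1) * A p (u-1)) + β u * A p u + γ (u+1) * A p (u+1)
      = (if p = 0 then 0 else α (p-1) * A u (p-1)) + β p * A u p + γ (p+1) * A u (p+1) := by
    intro p u hp hu
    have e1 := hE' p u hp (by omega)
    have e2 := hE' u p hu (by omega)
    rw [DM_E, ← hA, ← hB] at e1 e2
    linear_combination e1 - e2 - hBsym p u
  have main : ∀ n p u : ℕ, 2*k ≤ p + u + n + 2 → A p u = 0 := by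
    intro n
    induction n with
    | zero =>
      intro p u h
      rcases le_or_gt k u with hu | hu
      · exact hAr p u hu
      rcases le_or_gt k p with hp | hp
      · exact hAl p u hp
      have : u = k - 1 := by omega
      rw [this]; exact hAk1 p
    | succ n ihn =>
      intro p u h
      by_cases hcase : 2*k ≤ p + u + n + 2
      · exact ihn p u hcase
      have inner : ∀ p, ∀ u, p + u + n + 3 = 2*k → A p u = 0 := by
        intro p
        induction p using Nat.strong_induction_on with
        | _ p ihp =>
          intro u hpu
          rcases le_or_gt k p with hpk | hpk
          · exact hAl p u hpk
          rcases le_or_gt k u with huk | huk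
          · exact hAr p u huk
          by_cases hu1 : u = k - 1
          · rw [hu1]; exact hAk1 p
          have hu1k : u + 1 < k := by omega
          have hrel := Rel p (u+1) hpk hu1k
          have t1 : A p (u+1) = 0 := ihn p (u+1) (by omega)
          have t2 : A p (u+1+1) = 0 := ihn p (u+2) (by omega)
          have t3 : A (u+1) p = 0 := by rw [hAsym]; exact t1
          have t4 : A (u+1) (p+1) = 0 := by rw [hAsym]; exact ihn (p+1) (u+1) (by omega)
          rw [if_neg (by omega)] at hrel
          have hsucc : u + 1 - 1 = u := rfl
          rw [hsucc, t1, t2, t3, t4] at hrel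
          rcases Nat.eq_zero_or_pos p with rfl | hp0
          · rw [if_pos rfl] at hrel
            simp only [mul_zero, add_zero, zero_add] at hrel
            exact (mul_eq_zero.mp hrel).resolve_left (hα u)
          · have t5 : A (u+1) (p-1) = 0 := by
              rw [hAsym]; exact ihp (p-1) (by omega) (u+1) (by omega)
            rw [if_neg (by omega), t5] at hrel
            simp only [mul_zero, add_zero, zero_add] at hrel
            exact (mul_eq_zero.mp hrel).resolve_left (hα u)
      exact inner p u (by omega)
  have hx0 : x = 0 := by
    ext i j
    have := main (2*k) i j (by omega)
    rw [hA, DM_clamp_eq] at this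
    simpa using this
  refine ⟨hx0, ?_⟩
  have hA0 : ∀ p u, A p u = 0 := fun p u => main (2*k) p u (by omega)
  ext i j
  have e := hE' i j i.isLt (by omega)
  rw [DM_E, ← hA, ← hB] at e
  rw [hA0, hA0, hA0, hB, DM_clamp_eq] at e
  simp only [mul_zero, add_zero, zero_add, ite_self] at e
  simpa using e

lemma DM_T_inj (k : ℕ) (hk : 1 ≤ k) (α β γ : ℕ → F) (hα : ∀ j, α j ≠ 0) :
    Function.Injective (DM_T (F := F) k α β γ) := by
  refine (injective_iff_map_eq_zero _).mpr ?_
  intro fg h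
  have hEzero : ∀ (p : Fin k) (u : ℕ), u < k + 1 →
      DM_E k α β γ (DM_sym k fg.1) (DM_sym k fg.2) (p : ℕ) u = 0 := by
    intro p u hu
    have := congrFun h (p, (⟨u, hu⟩ : Fin (k+1)))
    simpa [DM_T] using this
  obtain ⟨h1, h2⟩ := DM_xy_zero k hk α β γ hα _ _ (DM_sym_symm k fg.1) (DM_sym_symm k fg.2) hEzero
  have f1 : fg.1 = 0 := by
    funext z
    induction z using Sym2.ind with
    | _ i j => exact congrFun (congrFun h1 i) j
  have f2 : fg.2 = 0 := by
    funext z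
    induction z using Sym2.ind with
    | _ i j => exact congrFun (congrFun h2 i) j
  exact Prod.ext f1 f2

lemma DM_card (k : ℕ) :
    Fintype.card (Sym2 (Fin k)) + Fintype.card (Sym2 (Fin k)) = k * (k+1) := by
  rw [Sym2.card, Fintype.card_fin, Nat.choose_two_right]
  obtain ⟨c, hc⟩ := Nat.even_mul_succ_self k
  have h1 : k+1-1 = k := rfl
  rw [h1, Nat.mul_comm (k+1) k, hc]
  omega

lemma DM_finrank (k : ℕ) :
    Module.finrank F ((Sym2 (Fin k) → F) × (Sym2 (Fin k) → F))
      = Module.finrank F (Fin k × Fin (k+1) → F) := by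
  rw [Module.finrank_prod, Module.finrank_fintype_fun_eq_card,
    Module.finrank_fintype_fun_eq_card, Fintype.card_prod, Fintype.card_fin, Fintype.card_fin]
  exact DM_card k

lemma DM_T_existsUnique (k : ℕ) (hk : 1 ≤ k) (α β γ : ℕ → F) (hα : ∀ j, α j ≠ 0)
    (t : Fin k × Fin (k+1) → F) :
    ∃! fg : (Sym2 (Fin k) → F) × (Sym2 (Fin k) → F), DM_T k α β γ fg = t := by
  have hinj := DM_T_inj k hk α β γ hα
  let e := (DM_T (F := F) k α β γ).linearEquivOfInjective hinj (DM_finrank k)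
  have he : ∀ fg, e fg = DM_T k α β γ fg := fun fg =>
    LinearMap.linearEquivOfInjective_apply _ _ _
  refine ⟨e.symm t, ?_, ?_⟩
  · show DM_T k α β γ (e.symm t) = t
    rw [← he]; exact e.apply_symm_apply t
  · intro z hz
    apply hinj
    rw [hz, ← he, e.apply_symm_apply]


lemma DM_scalar' (k : ℕ) (hk : 1 ≤ k) (α β γ : ℕ → F) (hα : ∀ j, α j ≠ 0)
    (φ : ℕ → Polynomial F) (hφ0 : φ 0 = 1)
    (hrec : ∀ j : ℕ, C (α j) * φ (j + 1)
      = (X - C (β j)) * φ j - C (γ j) * (if j = 0 then 0 else φ (j - 1)))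
    (w : Fin k → F) (c : ℕ → F) :
    ∃! xy : Matrix (Fin k) (Fin k) F × Matrix (Fin k) (Fin k) F,
      (∀ i j, xy.1 i j = xy.1 j i ∧ xy.2 i j = xy.2 j i) ∧
      ∀ p : Fin k, ∑ d : Fin k, (X * C (xy.1 p d) + C (xy.2 p d)) * φ (d : ℕ)
        = C (w p) * ∑ t ∈ Finset.range (k+1), φ t * C (c t) := by
  have claim : ∀ (x y : Matrix (Fin k) (Fin k) F) (p : Fin k),
      (∑ d : Fin k, (X * C (x p d) + C (y p d)) * φ (d : ℕ)
        = C (w p) * ∑ t ∈ Finset.range (k+1), φ t * C (c t))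
      ↔ ∀ u : ℕ, u < k + 1 → DM_E k α β γ x y (p : ℕ) u = w p * c u := by
    intro x y p
    have hR : C (w p) * ∑ t ∈ Finset.range (k+1), φ t * C (c t)
        = ∑ t ∈ Finset.range (k+1), C (w p * c t) * φ t := by
      rw [Finset.mul_sum]
      refine Finset.sum_congr rfl fun t _ => ?_
      rw [C_mul]; ring
    rw [DM_identity α β γ φ k hk hrec x y p, hR]
    constructor
    · intro h u hu
      have hz : ∑ u ∈ Finset.range (k+1),
          C (DM_E k α β γ x y (p : ℕ) u - w p * c u) * φ u = 0 := by
        simp only [C_sub, sub_mul, Finset.sum_sub_distrib, h, sub_self]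
      exact eq_of_sub_eq_zero (DM_phi_indep α β γ φ hα hφ0 hrec (k+1) _ hz u hu)
    · intro h
      exact Finset.sum_congr rfl fun u hu => by rw [h u (Finset.mem_range.mp hu)]
  obtain ⟨fg, hfg, huniq⟩ := DM_T_existsUnique k hk α β γ hα
    (fun pu => w pu.1 * c (pu.2 : ℕ))
  refine ⟨(DM_sym k fg.1, DM_sym k fg.2), ⟨?_, ?_⟩, ?_⟩
  · intro i j; exact ⟨DM_sym_symm k fg.1 i j, DM_sym_symm k fg.2 i j⟩
  · intro p
    refine (claim _ _ p).mpr ?_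
    intro u hu
    have := congrFun hfg (p, (⟨u, hu⟩ : Fin (k+1)))
    simpa [DM_T] using this
  · rintro ⟨x, y⟩ ⟨hs, heq⟩
    let f : Sym2 (Fin k) → F := Sym2.lift ⟨fun i j => x i j, fun i j => (hs i j).1⟩
    let g : Sym2 (Fin k) → F := Sym2.lift ⟨fun i j => y i j, fun i j => (hs i j).2⟩
    have hx : DM_sym k f = x := by funext i j; simp [DM_sym, f]
    have hy : DM_sym k g = y := by funext i j; simp [DM_sym, g]
    have hfgeq : (f, g) = fg := by
      refine huniq (f, g) ?_
      funext pu
      show DM_E k α β γ (DM_sym k f) (DM_sym k g) (pu.1 : ℕ) (pu.2 : ℕ)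
        = w pu.1 * c (pu.2 : ℕ)
      rw [hx, hy]
      exact (claim x y pu.1).mp (heq pu.1) (pu.2 : ℕ) pu.2.isLt
    have h1 : DM_sym k fg.1 = x := by rw [← hfgeq]; exact hx
    have h2 : DM_sym k fg.2 = y := by rw [← hfgeq]; exact hy
    exact Prod.ext h1.symm h2.symm


def DM_flip {k : ℕ} (x : Matrix (Fin k) (Fin k) F) : Matrix (Fin k) (Fin k) F :=
  fun i j => x i.rev j.rev

lemma DM_flip_flip {k : ℕ} (x : Matrix (Fin k) (Fin k) F) : DM_flip (DM_flip x) = x := by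
  funext i j; simp [DM_flip, Fin.rev_rev]

lemma DM_scalar (k : ℕ) (hk : 1 ≤ k) (α β γ : ℕ → F) (hα : ∀ j, α j ≠ 0)
    (φ : ℕ → Polynomial F) (hφ0 : φ 0 = 1)
    (hrec : ∀ j : ℕ, C (α j) * φ (j + 1)
      = (X - C (β j)) * φ j - C (γ j) * (if j = 0 then 0 else φ (j - 1)))
    (w : Fin k → F) (c : ℕ → F) :
    ∃! xy : Matrix (Fin k) (Fin k) F × Matrix (Fin k) (Fin k) F,
      (∀ i j, xy.1 i j = xy.1 j i ∧ xy.2 i j = xy.2 j i) ∧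
      ∀ i : Fin k, ∑ j : Fin k, (X * C (xy.1 i j) + C (xy.2 i j)) * φ (k - 1 - (j : ℕ))
        = C (w i) * ∑ t ∈ Finset.range (k+1), φ t * C (c t) := by
  obtain ⟨xy', h', huniq'⟩ := DM_scalar' k hk α β γ hα φ hφ0 hrec (fun p => w p.rev) c
  have hval : ∀ j : Fin k, k - 1 - ((j.rev : Fin k) : ℕ) = (j : ℕ) := by
    intro j
    rw [Fin.val_rev]
    omega
  -- transfer of the equation between coordinates
  have key : ∀ (x y : Matrix (Fin k) (Fin k) F),
      (∀ i : Fin k, ∑ j : Fin k, (X * C (x i j) + C (y i j)) * φ (k - 1 - (j : ℕ))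
          = C (w i) * ∑ t ∈ Finset.range (k+1), φ t * C (c t))
      ↔ (∀ p : Fin k,
          ∑ d : Fin k, (X * C (DM_flip x p d) + C (DM_flip y p d)) * φ (d : ℕ)
            = C ((fun p => w p.rev) p) * ∑ t ∈ Finset.range (k+1), φ t * C (c t)) := by
    intro x y
    have hsum : ∀ p : Fin k,
        ∑ d : Fin k, (X * C (DM_flip x p d) + C (DM_flip y p d)) * φ (d : ℕ)
          = ∑ j : Fin k, (X * C (x p.rev j) + C (y p.rev j)) * φ (k - 1 - (j : ℕ)) := by
      intro p
      rw [← Equiv.sum_comp (Fin.revPerm) (fun j =>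
        (X * C (x p.rev j) + C (y p.rev j)) * φ (k - 1 - (j : ℕ)))]
      refine Finset.sum_congr rfl fun d _ => ?_
      simp only [Fin.revPerm_apply, DM_flip, hval]
    constructor
    · intro h p; rw [hsum p]; exact h p.rev
    · intro h i
      have := h i.rev
      rw [hsum i.rev, Fin.rev_rev] at this
      simpa [Fin.rev_rev] using this
  refine ⟨(DM_flip xy'.1, DM_flip xy'.2), ⟨?_, ?_⟩, ?_⟩
  · intro i j
    exact ⟨(h'.1 i.rev j.rev).1, (h'.1 i.rev j.rev).2⟩
  · refine (key _ _).mpr ?_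
    have h1 : DM_flip (DM_flip xy'.1) = xy'.1 := DM_flip_flip _
    have h2 : DM_flip (DM_flip xy'.2) = xy'.2 := DM_flip_flip _
    rw [h1, h2]
    exact h'.2
  · rintro ⟨x, y⟩ ⟨hs, heq⟩
    have hcond : (∀ i j, (DM_flip x) i j = (DM_flip x) j i ∧ (DM_flip y) i j = (DM_flip y) j i) ∧
        ∀ p : Fin k, ∑ d : Fin k, (X * C ((DM_flip x) p d) + C ((DM_flip y) p d)) * φ (d : ℕ)
          = C ((fun p => w p.rev) p) * ∑ t ∈ Finset.range (k+1), φ t * C (c t) := by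
      constructor
      · intro i j; exact ⟨hs i.rev j.rev |>.1, (hs i.rev j.rev).2⟩
      · exact (key x y).mp heq
    have := huniq' (DM_flip x, DM_flip y) hcond
    have hx : DM_flip x = xy'.1 := congrArg Prod.fst this
    have hy : DM_flip y = xy'.2 := congrArg Prod.snd this
    have hx' : x = DM_flip xy'.1 := by rw [← hx, DM_flip_flip]
    have hy' : y = DM_flip xy'.2 := by rw [← hy, DM_flip_flip]
    exact Prod.ext hx' hy'

lemma DM_pencil_coeff (a b a' b' : F)
    (h : X * C a + C b = X * C a' + C b') : a = a' ∧ b = b' := by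
  constructor
  · have := congrArg (fun p => Polynomial.coeff p 1) h
    simpa [mul_comm Polynomial.X (C a), mul_comm Polynomial.X (C a'), coeff_C_mul] using this
  · have := congrArg (fun p => Polynomial.coeff p 0) h
    simpa [mul_comm Polynomial.X (C a), mul_comm Polynomial.X (C a'), coeff_C_mul] using this


lemma DM_mul_phiKron {m k : ℕ} (φ : ℕ → Polynomial F)
    (f : Matrix (Fin k × Fin m) (Fin k × Fin m) (Polynomial F)) (i : Fin k) (r s : Fin m) :
    (f * phiKron φ k m) (i, r) s = ∑ j : Fin k, f (i, r) (j, s) * φ (k - 1 - (j : ℕ)) := by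
  rw [Matrix.mul_apply, Fintype.sum_prod_type]
  refine Finset.sum_congr rfl fun j _ => ?_
  have h : ∀ s' : Fin m, f (i, r) (j, s') * phiKron φ k m (j, s') s
      = if s' = s then f (i, r) (j, s') * φ (k - 1 - (j : ℕ)) else 0 := by
    intro s'
    simp only [phiKron, Matrix.of_apply]
    split <;> simp
  rw [Finset.sum_congr rfl fun s' _ => h s']
  simp

lemma DM_vKron_mul {m k : ℕ} (v : Fin k → F) (M : Matrix (Fin m) (Fin m) (Polynomial F))
    (i : Fin k) (r s : Fin m) :
    (vKron k m (fun i => C (v i)) * M) (i, r) s = C (v i) * M r s := by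
  rw [Matrix.mul_apply]
  have h : ∀ s' : Fin m, vKron k m (fun i => C (v i)) (i, r) s' * M s' s
      = if s' = r then C (v i) * M s' s else 0 := by
    intro s'
    simp only [vKron, Matrix.of_apply]
    rcases eq_or_ne s' r with rfl | hne
    · simp
    · rw [if_neg (by exact fun hh => hne hh.symm), if_neg hne, zero_mul]
  rw [Finset.sum_congr rfl fun s' _ => h s']
  simp

end


/-- For a polynomial matrix `P(λ) = Σ_{i=0}^{k} P_i φ_i(λ)` of degree
`k ≥ 2` and every `v ∈ F^k` there is exactly one block-symmetric pencil `L(λ) = λX + Y`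
with `L(λ)(Φ_k(λ)⊗I_m) = v ⊗ P(λ)`, i.e. exactly one pencil in `𝔻𝕄(P)` with ansatz
vector `v`. -/
theorem existsUnique_DM_pencil
    {F : Type*} [Field F] {m k : ℕ} (hk : 2 ≤ k)
    (α β γ : ℕ → F) (hα : ∀ j, α j ≠ 0)
    (φ : ℕ → Polynomial F) (hφ0 : φ 0 = 1)
    (hrec : ∀ j : ℕ, Polynomial.C (α j) * φ (j + 1)
      = (Polynomial.X - Polynomial.C (β j)) * φ j
        - Polynomial.C (γ j) * (if j = 0 then 0 else φ (j - 1)))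
    (P : ℕ → Matrix (Fin m) (Fin m) F) (hPk : P k ≠ 0)
    (v : Fin k → F) :
    ∃! XY : Matrix (Fin k × Fin m) (Fin k × Fin m) F ×
              Matrix (Fin k × Fin m) (Fin k × Fin m) F,
      (∀ (i j : Fin k) (r s : Fin m),
          (Matrix.of fun p q =>
              Polynomial.X * Polynomial.C (XY.1 p q) + Polynomial.C (XY.2 p q) :
            Matrix (Fin k × Fin m) (Fin k × Fin m) (Polynomial F)) (i, r) (j, s)
            = (Matrix.of fun p q =>
                Polynomial.X * Polynomial.C (XY.1 p q) + Polynomial.C (XY.2 p q) :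
              Matrix (Fin k × Fin m) (Fin k × Fin m) (Polynomial F)) (j, r) (i, s)) ∧
      (Matrix.of fun p q =>
          Polynomial.X * Polynomial.C (XY.1 p q) + Polynomial.C (XY.2 p q) :
        Matrix (Fin k × Fin m) (Fin k × Fin m) (Polynomial F)) * phiKron φ k m
        = vKron k m (fun i => Polynomial.C (v i)) *
            (∑ i ∈ Finset.range (k + 1), (P i).map (fun a => φ i * Polynomial.C a)) := by
  have hk1 : 1 ≤ k := by omega
  choose sol hsol husol using fun r s : Fin m =>
    DM_scalar k hk1 α β γ hα φ hφ0 hrec v (fun t => P t r s)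
  have hM : ∀ r s : Fin m,
      (∑ t ∈ Finset.range (k + 1), (P t).map (fun a => φ t * Polynomial.C a)) r s
        = ∑ t ∈ Finset.range (k + 1), φ t * Polynomial.C (P t r s) := by
    intro r s
    rw [Matrix.sum_apply]
    exact Finset.sum_congr rfl fun t _ => rfl
  refine ⟨(fun p q => (sol p.2 q.2).1 p.1 q.1, fun p q => (sol p.2 q.2).2 p.1 q.1),
    ⟨?_, ?_⟩, ?_⟩
  · intro i j r s
    show Polynomial.X * Polynomial.C ((sol r s).1 i j) + Polynomial.C ((sol r s).2 i j)
      = Polynomial.X * Polynomial.C ((sol r s).1 j i) + Polynomial.C ((sol r s).2 j i)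
    rw [((hsol r s).1 i j).1, ((hsol r s).1 i j).2]
  · refine Matrix.ext fun p s => ?_
    obtain ⟨i, r⟩ := p
    rw [DM_mul_phiKron, DM_vKron_mul, hM r s]
    exact (hsol r s).2 i
  · rintro ⟨X', Y'⟩ ⟨hsym, heq⟩
    have hslice : ∀ r s : Fin m,
        ((fun i j => X' (i, r) (j, s)), (fun i j => Y' (i, r) (j, s))) = sol r s := by
      intro r s
      refine husol r s _ ⟨?_, ?_⟩
      · intro i j
        have h := hsym i j r s
        simp only [Matrix.of_apply] at h
        exact DM_pencil_coeff _ _ _ _ h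
      · intro i
        have h : ((Matrix.of fun p q =>
            Polynomial.X * Polynomial.C (X' p q) + Polynomial.C (Y' p q) :
            Matrix (Fin k × Fin m) (Fin k × Fin m) (Polynomial F)) * phiKron φ k m) (i, r) s
            = (vKron k m (fun i => Polynomial.C (v i)) *
              (∑ t ∈ Finset.range (k + 1), (P t).map (fun a => φ t * Polynomial.C a)))
                (i, r) s := by rw [heq]
        rw [DM_mul_phiKron, DM_vKron_mul, hM r s] at h
        exact h
    have hX : X' = (fun p q => (sol p.2 q.2).1 p.1 q.1) := by
      funext p q
      obtain ⟨i, r⟩ := p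
      obtain ⟨j, s⟩ := q
      exact congrFun (congrFun (congrArg Prod.fst (hslice r s)) i) j
    have hY : Y' = (fun p q => (sol p.2 q.2).2 p.1 q.1) := by
      funext p q
      obtain ⟨i, r⟩ := p
      obtain ⟨j, s⟩ := q
      exact congrFun (congrFun (congrArg Prod.snd (hslice r s)) i) j
    exact Prod.ext hX hY
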